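/- Let A be an N×N real matrix with A E = E, E A = E for an idempotent matrix E, and ρ(A - E) < 1. Then for any ν ∈ (0,1), the matrix I - (1-ν)A is invertible, ν A (I - (1-ν)A)^{-1} = ν Σ_{j=0}^∞ ((1-ν)A)^j A, and lim_{ν→0+} ν A (I - (1-ν)A)^{-1} = E. -/

import Mathlib

open Matrix Filter

section Aux
attribute [local instance] Matrix.linftyOpNormedRing Matrix.linftyOpNormedAlgebra

-- geometric series from summability
lemma my_geom_mul {R : Type*} [NormedRing R] (x : R) (h : Summable fun n : ℕ => x ^ n) :
    (∑' i : ℕ, x ^ i) * (1 - x) = 1 := by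
  have h2 := h.hasSum.mul_right (1 - x)
  refine tendsto_nhds_unique h2.tendsto_sum_nat ?_
  have hx : Tendsto (fun n : ℕ => x ^ n) atTop (nhds 0) := h.tendsto_atTop_zero
  have : Tendsto (fun n : ℕ => 1 - x ^ n) atTop (nhds 1) := by
    simpa using tendsto_const_nhds.sub hx
  convert ← this
  rw [← geom_sum_mul_neg, Finset.sum_mul]

lemma my_mul_geom {R : Type*} [NormedRing R] (x : R) (h : Summable fun n : ℕ => x ^ n) :
    (1 - x) * (∑' i : ℕ, x ^ i) = 1 := by
  have h2 := h.hasSum.mul_left (1 - x)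
  refine tendsto_nhds_unique h2.tendsto_sum_nat ?_
  have hx : Tendsto (fun n : ℕ => x ^ n) atTop (nhds 0) := h.tendsto_atTop_zero
  have : Tendsto (fun n : ℕ => 1 - x ^ n) atTop (nhds 1) := by
    simpa using tendsto_const_nhds.sub hx
  convert ← this
  rw [← mul_neg_geom_sum, Finset.mul_sum]

lemma my_norm_map {n : Type*} [Fintype n] [DecidableEq n] (M : Matrix n n ℝ) :
    ‖M.map (algebraMap ℝ ℂ)‖ = ‖M‖ := by
  rw [Matrix.linfty_opNorm_def, Matrix.linfty_opNorm_def]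
  norm_cast
  congr 1
  ext i
  congr 1
  ext j
  simp [Matrix.map_apply]

lemma my_spectral_bound {R : Type*} [NormedRing R] [NormedAlgebra ℂ R] [CompleteSpace R]
    (a : R) (h : spectralRadius ℂ a < 1) :
    ∃ C r : ℝ, 0 < C ∧ 0 < r ∧ r < 1 ∧ ∀ n : ℕ, ‖a ^ n‖ ≤ C * r ^ n := by
  obtain ⟨t, ht1, ht2⟩ := ENNReal.lt_iff_exists_nnreal_btwn.mp h
  have htlt : (t : ℝ) < 1 := by exact_mod_cast ht2
  set r : ℝ := max (t : ℝ) (1/2) with hr_def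
  have hr0 : 0 < r := lt_max_of_lt_right (by norm_num)
  have hr1 : r < 1 := max_lt htlt (by norm_num)
  have hG := spectrum.pow_nnnorm_pow_one_div_tendsto_nhds_spectralRadius a
  have hev : ∀ᶠ n : ℕ in atTop, (‖a ^ n‖₊ : ENNReal) ^ (1 / (n : ℝ)) < (t : ENNReal) :=
    hG.eventually_lt_const ht1
  obtain ⟨M, hM⟩ := eventually_atTop.mp hev
  have key : ∀ n : ℕ, M + 1 ≤ n → ‖a ^ n‖ ≤ r ^ n := by
    intro n hn
    have hn1 : 1 ≤ n := le_trans (Nat.le_add_left 1 M) hn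
    have hne : (n : ℝ) ≠ 0 := Nat.cast_ne_zero.mpr (by omega)
    have h1 := hM n (le_trans (Nat.le_succ M) hn)
    have h2 : ((‖a ^ n‖₊ : ENNReal) ^ (1 / (n : ℝ))) ^ (n : ℝ) ≤ (t : ENNReal) ^ (n : ℝ) :=
      ENNReal.rpow_le_rpow h1.le (Nat.cast_nonneg n)
    rw [← ENNReal.rpow_mul, one_div_mul_cancel hne, ENNReal.rpow_one, ENNReal.rpow_natCast,
      ← ENNReal.coe_pow, ENNReal.coe_le_coe] at h2
    have h3 : ‖a ^ n‖ ≤ (t : ℝ) ^ n := by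
      calc ‖a ^ n‖ = ((‖a ^ n‖₊ : ℝ)) := rfl
        _ ≤ ((t ^ n : NNReal) : ℝ) := by exact_mod_cast h2
        _ = (t : ℝ) ^ n := by push_cast; ring
    exact h3.trans (pow_le_pow_left₀ t.coe_nonneg (le_max_left _ _) n)
  set C : ℝ := 1 + ∑ k ∈ Finset.range (M + 1), ‖a ^ k‖ / r ^ k with hC_def
  have hC1 : (1:ℝ) ≤ C := by
    have : 0 ≤ ∑ k ∈ Finset.range (M + 1), ‖a ^ k‖ / r ^ k :=
      Finset.sum_nonneg fun k _ => div_nonneg (norm_nonneg _) (pow_nonneg hr0.le k)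
    rw [hC_def]; linarith
  refine ⟨C, r, lt_of_lt_of_le one_pos hC1, hr0, hr1, fun n => ?_⟩
  rcases le_or_gt (M + 1) n with hn | hn
  · calc ‖a ^ n‖ ≤ r ^ n := key n hn
      _ ≤ C * r ^ n := le_mul_of_one_le_left (pow_nonneg hr0.le n) hC1
  · have hmem : n ∈ Finset.range (M + 1) := Finset.mem_range.mpr hn
    have h4 : ‖a ^ n‖ / r ^ n ≤ C := by
      have := Finset.single_le_sum (f := fun k => ‖a ^ k‖ / r ^ k)
        (fun k _ => div_nonneg (norm_nonneg _) (pow_nonneg hr0.le k)) hmem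
      rw [hC_def]; linarith
    calc ‖a ^ n‖ = (‖a ^ n‖ / r ^ n) * r ^ n := by
          field_simp
      _ ≤ C * r ^ n := mul_le_mul_of_nonneg_right h4 (pow_nonneg hr0.le n)

end Aux

open scoped Topology

theorem smoothing_resolvent_limit {N : ℕ}
    (A E : Matrix (Fin N) (Fin N) ℝ)
    (hE : E * E = E)
    (h1 : A * E = E) (h2 : E * A = E)
    (h3 : spectralRadius ℂ ((A - E).map (algebraMap ℝ ℂ)) < 1) :
    (∀ ν : ℝ, 0 < ν → ν < 1 →
      IsUnit (1 - (1 - ν) • A) ∧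
      ν • (A * (1 - (1 - ν) • A)⁻¹) =
        ν • ((∑' j : ℕ, ((1 - ν) • A) ^ j) * A)) ∧
    Tendsto (fun ν : ℝ => ν • (A * (1 - (1 - ν) • A)⁻¹))
      (nhdsWithin 0 (Set.Ioi 0)) (nhds E) := by
  letI : NormedRing (Matrix (Fin N) (Fin N) ℝ) := Matrix.linftyOpNormedRing
  letI : NormedSpace ℝ (Matrix (Fin N) (Fin N) ℝ) := Matrix.linftyOpNormedSpace
  letI : NormedRing (Matrix (Fin N) (Fin N) ℂ) := Matrix.linftyOpNormedRing
  letI : NormedAlgebra ℂ (Matrix (Fin N) (Fin N) ℂ) := Matrix.linftyOpNormedAlgebra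
  haveI : CompleteSpace (Matrix (Fin N) (Fin N) ℂ) := by infer_instance
  set B := A - E with hB_def
  have hBE : B * E = 0 := by rw [hB_def, sub_mul, h1, hE, sub_self]
  have hEB : E * B = 0 := by rw [hB_def, mul_sub, h2, hE, sub_self]
  have hA_eq : A = E + B := by rw [hB_def]; abel
  have hApow : ∀ n : ℕ, A ^ (n + 1) = E + B ^ (n + 1) := by
    intro n
    induction n with
    | zero => simpa using hA_eq
    | succ k ih =>
      have h5 : B ^ (k + 1) * E = 0 := by rw [pow_succ, mul_assoc, hBE, mul_zero]
      calc A ^ (k + 1 + 1) = A ^ (k + 1) * A := pow_succ A (k + 1)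
        _ = (E + B ^ (k + 1)) * (E + B) := by rw [ih, ← hA_eq]
        _ = E * E + E * B + (B ^ (k + 1) * E + B ^ (k + 1) * B) := by noncomm_ring
        _ = E + B ^ (k + 1 + 1) := by rw [hE, hEB, h5, ← pow_succ]; abel
  obtain ⟨C, r, hC, hr0, hr1, hbound0⟩ := my_spectral_bound (B.map (algebraMap ℝ ℂ)) h3
  have hbound : ∀ n : ℕ, ‖B ^ n‖ ≤ C * r ^ n := by
    intro n
    have hmp : (B.map (algebraMap ℝ ℂ)) ^ n = (B ^ n).map (algebraMap ℝ ℂ) := by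
      simp only [← RingHom.mapMatrix_apply, ← map_pow]
    calc ‖B ^ n‖ = ‖(B ^ n).map (algebraMap ℝ ℂ)‖ := (my_norm_map _).symm
      _ = ‖(B.map (algebraMap ℝ ℂ)) ^ n‖ := by rw [hmp]
      _ ≤ C * r ^ n := hbound0 n
  set D : ℝ := ‖(1 : Matrix (Fin N) (Fin N) ℝ)‖ + ‖E‖ + C with hD_def
  have hAbound : ∀ j : ℕ, ‖A ^ j‖ ≤ D := by
    intro j
    match j with
    | 0 =>
      rw [pow_zero, hD_def]
      have := norm_nonneg E
      linarith
    | (k + 1) =>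
      rw [hApow k, hD_def]
      have hb := hbound (k + 1)
      have hrk : r ^ (k + 1) ≤ 1 := pow_le_one₀ hr0.le hr1.le
      have : C * r ^ (k + 1) ≤ C := by nlinarith
      have h7 := norm_add_le E (B ^ (k + 1))
      have := norm_nonneg (1 : Matrix (Fin N) (Fin N) ℝ)
      linarith
  set K : ℝ := C * r * (1 - r)⁻¹ with hK_def
  have main : ∀ ν : ℝ, 0 < ν → ν < 1 →
      IsUnit (1 - (1 - ν) • A) ∧
      ν • (A * (1 - (1 - ν) • A)⁻¹) = ν • ((∑' j : ℕ, ((1 - ν) • A) ^ j) * A) ∧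
      ‖ν • (A * (1 - (1 - ν) • A)⁻¹) - E‖ ≤ ν * K := by
    intro ν hν0 hν1
    have hν' : (0:ℝ) < 1 - ν := by linarith
    have h1ν : (1:ℝ) - ν < 1 := by linarith
    set x := (1 - ν) • A with hx_def
    have hxpow : ∀ j : ℕ, x ^ j = (1 - ν) ^ j • A ^ j := fun j => smul_pow _ _ _
    have hnormx : ∀ j : ℕ, ‖x ^ j‖ ≤ D * (1 - ν) ^ j := by
      intro j
      rw [hxpow, norm_smul, Real.norm_eq_abs, abs_of_nonneg (pow_nonneg hν'.le j)]
      calc (1 - ν) ^ j * ‖A ^ j‖ ≤ (1 - ν) ^ j * D :=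
            mul_le_mul_of_nonneg_left (hAbound j) (pow_nonneg hν'.le j)
        _ = D * (1 - ν) ^ j := mul_comm _ _
    have hsumgeoD : Summable fun j : ℕ => D * (1 - ν) ^ j :=
      (summable_geometric_of_lt_one hν'.le h1ν).mul_left D
    have hsum : Summable fun j : ℕ => x ^ j :=
      Summable.of_norm (hsumgeoD.of_nonneg_of_le (fun _ => norm_nonneg _) hnormx)
    set S := ∑' j : ℕ, x ^ j with hS_def
    have hSr : S * (1 - x) = 1 := my_geom_mul x hsum
    have hSl : (1 - x) * S = 1 := my_mul_geom x hsum
    have hunit : IsUnit (1 - x) := ⟨⟨1 - x, S, hSl, hSr⟩, rfl⟩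
    have hinv : (1 - x)⁻¹ = S := Matrix.inv_eq_right_inv hSl
    have hcomm : A * S = S * A := by
      have h6 : ∀ j : ℕ, A * x ^ j = x ^ j * A := fun j =>
        (((Commute.refl A).smul_right (1 - ν)).pow_right j).eq
      calc A * S = ∑' j : ℕ, A * x ^ j := (hsum.tsum_mul_left A).symm
        _ = ∑' j : ℕ, x ^ j * A := by simp only [h6]
        _ = S * A := hsum.tsum_mul_right A
    set Rν := ∑' j : ℕ, (1 - ν) ^ j • B ^ (j + 1) with hR_def
    have hterm : ∀ j : ℕ, A * x ^ j = (1 - ν) ^ j • E + (1 - ν) ^ j • B ^ (j + 1) := by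
      intro j
      rw [hxpow, mul_smul_comm, ← pow_succ', hApow j, smul_add]
    have hsgeo : Summable fun j : ℕ => (1 - ν) ^ j :=
      summable_geometric_of_lt_one hν'.le h1ν
    have hg1 : Summable fun j : ℕ => (1 - ν) ^ j • E := hsgeo.smul_const E
    have hb2 : ∀ j : ℕ, ‖(1 - ν) ^ j • B ^ (j + 1)‖ ≤ C * r * r ^ j := by
      intro j
      rw [norm_smul, Real.norm_eq_abs, abs_of_nonneg (pow_nonneg hν'.le j)]
      have h8 : (1 - ν) ^ j ≤ 1 := pow_le_one₀ hν'.le h1ν.le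
      calc (1 - ν) ^ j * ‖B ^ (j + 1)‖ ≤ 1 * ‖B ^ (j + 1)‖ :=
            mul_le_mul_of_nonneg_right h8 (norm_nonneg _)
        _ = ‖B ^ (j + 1)‖ := one_mul _
        _ ≤ C * r ^ (j + 1) := hbound (j + 1)
        _ = C * r * r ^ j := by ring
    have hgeo2 : Summable fun j : ℕ => C * r * r ^ j :=
      (summable_geometric_of_lt_one hr0.le hr1).mul_left (C * r)
    have hsn2 : Summable fun j : ℕ => ‖(1 - ν) ^ j • B ^ (j + 1)‖ :=
      hgeo2.of_nonneg_of_le (fun _ => norm_nonneg _) hb2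
    have hg2 : Summable fun j : ℕ => (1 - ν) ^ j • B ^ (j + 1) := Summable.of_norm hsn2
    have htsum1 : ∑' j : ℕ, (1 - ν) ^ j • E = ν⁻¹ • E := by
      rw [Summable.tsum_smul_const hsgeo, tsum_geometric_of_lt_one hν'.le h1ν]
      norm_num
    have hform : ν • (A * (1 - x)⁻¹) = E + ν • Rν := by
      rw [hinv]
      calc ν • (A * S) = ν • ∑' j : ℕ, A * x ^ j := by rw [hsum.tsum_mul_left A]
        _ = ν • ∑' j : ℕ, ((1 - ν) ^ j • E + (1 - ν) ^ j • B ^ (j + 1)) := by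
            simp only [hterm]
        _ = ν • ((∑' j : ℕ, (1 - ν) ^ j • E) + Rν) := by rw [Summable.tsum_add hg1 hg2]
        _ = ν • (ν⁻¹ • E + Rν) := by rw [htsum1]
        _ = E + ν • Rν := by
            rw [smul_add, smul_smul, mul_inv_cancel₀ hν0.ne', one_smul]
    have hRbound : ‖Rν‖ ≤ K := by
      calc ‖Rν‖ ≤ ∑' j : ℕ, ‖(1 - ν) ^ j • B ^ (j + 1)‖ := norm_tsum_le_tsum_norm hsn2
        _ ≤ ∑' j : ℕ, C * r * r ^ j := Summable.tsum_le_tsum hb2 hsn2 hgeo2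
        _ = C * r * (1 - r)⁻¹ := by
            rw [tsum_mul_left, tsum_geometric_of_lt_one hr0.le hr1]
        _ = K := hK_def.symm
    refine ⟨hunit, by rw [hinv, hcomm], ?_⟩
    rw [hform]
    have : E + ν • Rν - E = ν • Rν := by abel
    rw [this, norm_smul, Real.norm_eq_abs, abs_of_pos hν0]
    exact mul_le_mul_of_nonneg_left hRbound hν0.le
  refine ⟨fun ν h0 h1 => ⟨(main ν h0 h1).1, (main ν h0 h1).2.1⟩, ?_⟩
  have hlim : Tendsto (fun ν : ℝ => ν • (A * (1 - (1 - ν) • A)⁻¹))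
      (nhdsWithin 0 (Set.Ioi 0)) (nhds E) := by
    refine tendsto_iff_norm_sub_tendsto_zero.2 ?_
    apply squeeze_zero' (g := fun ν : ℝ => ν * K)
    · filter_upwards with ν using norm_nonneg _
    · filter_upwards [Ioo_mem_nhdsGT_of_mem (Set.left_mem_Ico.mpr one_pos)] with ν hν
      exact (main ν hν.1 hν.2).2.2
    · have : Tendsto (fun ν : ℝ => ν * K) (nhds 0) (nhds 0) := by
        simpa using (continuous_mul_right K).tendsto (0 : ℝ)
      exact this.mono_left nhdsWithin_le_nhds
  exact hlim
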